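/- Let θ be an automorphism of a finite generalised quadrangle of order (s,t) whose order is a prime x with x > s+1 and x > t+1. Then θ fixes no point of the quadrangle. -/

import Mathlib

lemma fix_of_small {α : Type*} [Finite α] {x : ℕ} (hx : x.Prime) (σ : Equiv.Perm α)
    (hσ : σ ^ x = 1) (pred : α → Prop) (hinv : ∀ a, pred a → pred (σ a))
    {a : α} (ha : pred a) (hcard : Nat.card {b // pred b} < x) : σ a = a := by
  by_contra hne
  have hmem : ∀ i : ℕ, pred ((σ ^ i) a) := by
    intro i
    induction i with
    | zero => simpa using ha
    | succ n ih =>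
      rw [pow_succ', Equiv.Perm.mul_apply]
      exact hinv _ ih
  have key : ∀ i j : ℕ, i ≤ j → j < x → (σ ^ i) a = (σ ^ j) a → i = j := by
    intro i j hle hlt heq
    by_contra hne2
    set d := j - i with hd
    have hd0 : d ≠ 0 := by omega
    have hdx : d < x := by omega
    have hda : (σ ^ d) a = a := by
      have h2 : (σ ^ i) ((σ ^ d) a) = (σ ^ i) a := by
        rw [← Equiv.Perm.mul_apply, ← pow_add, show i + d = j by omega]
        exact heq.symm
      exact (σ ^ i).injective h2
    have hcop : Nat.Coprime x d := by
      rw [hx.coprime_iff_not_dvd]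
      intro hdvd
      exact absurd (Nat.le_of_dvd (Nat.pos_of_ne_zero hd0) hdvd) (by omega)
    obtain ⟨k, -, hk⟩ := Nat.exists_mul_mod_eq_one_of_coprime hcop.symm hx.one_lt
    have hloop : ∀ m : ℕ, (σ ^ (d * m)) a = a := by
      intro m
      induction m with
      | zero => simp
      | succ n ih =>
        rw [Nat.mul_succ, pow_add, Equiv.Perm.mul_apply, hda, ih]
    have hdk : d * k = x * (d * k / x) + 1 := by
      conv_lhs => rw [← Nat.div_add_mod (d * k) x, hk]
    have : σ a = a := by
      have := hloop k
      rwa [hdk, pow_add, pow_mul, hσ, one_pow, pow_one, one_mul] at this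
    exact hne this
  have hinj : Function.Injective (fun i : Fin x => (⟨(σ ^ (i : ℕ)) a, hmem i⟩ : {b // pred b})) := by
    intro i j hij
    have h1 : (σ ^ (i : ℕ)) a = (σ ^ (j : ℕ)) a := congrArg Subtype.val hij
    rcases le_total (i : ℕ) (j : ℕ) with h | h
    · exact Fin.ext (key _ _ h j.isLt h1)
    · exact Fin.ext ((key _ _ h i.isLt h1.symm).symm)
  have := Nat.card_le_card_of_injective _ hinj
  simp only [Nat.card_eq_fintype_card, Fintype.card_fin] at this
  omega



/-- A (finite) generalised quadrangle of order `(s, t)`: every line is incident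
with exactly `s + 1` points, every point is incident with exactly `t + 1` lines,
any two distinct points lie on at most one common line, and for every
non-incident point-line pair `(p, l)` there is a unique point on `l`
collinear with `p`. -/
structure GenQuadrangle (P L : Type*) (s t : ℕ) where
  inc : P → L → Prop
  pts_per_line : ∀ l : L, Nat.card {p : P // inc p l} = s + 1
  lines_per_pt : ∀ p : P, Nat.card {l : L // inc p l} = t + 1
  unique_line : ∀ ⦃p q : P⦄ ⦃l m : L⦄, p ≠ q →
      inc p l → inc q l → inc p m → inc q m → l = m
  gq_axiom : ∀ (p : P) (l : L), ¬ inc p l →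
      ∃! q : P, inc q l ∧ ∃ m : L, inc p m ∧ inc q m

/-- Two points are collinear if they are distinct and lie on a common line. -/
def GenQuadrangle.Collinear {P L : Type*} {s t : ℕ} (Q : GenQuadrangle P L s t)
    (p q : P) : Prop :=
  p ≠ q ∧ ∃ l : L, Q.inc p l ∧ Q.inc q l

/-- An automorphism of a generalised quadrangle: a pair of permutations of the
points and of the lines which together preserve incidence. -/
structure GenQuadrangle.Auto {P L : Type*} {s t : ℕ} (Q : GenQuadrangle P L s t) where
  permP : Equiv.Perm P
  permL : Equiv.Perm L
  pres : ∀ (p : P) (l : L), Q.inc p l ↔ Q.inc (permP p) (permL l)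

/-- An automorphism of a finite generalised quadrangle of order (s,t) whose
order is a prime x with x > s+1 and x > t+1 fixes no point. -/
theorem auto_of_large_prime_order_fixes_no_point {P L : Type*} [Fintype P] [Fintype L]
    {s t x : ℕ} (Q : GenQuadrangle P L s t) (θ : Q.Auto)
    (hx : x.Prime) (hord : orderOf (θ.permP, θ.permL) = x)
    (hxs : s + 1 < x) (hxt : t + 1 < x) :
    ∀ p : P, θ.permP p ≠ p := by
  intro p hp
  have hpow : (θ.permP, θ.permL) ^ x = 1 := by rw [← hord]; exact pow_orderOf_eq_one _
  have hP : θ.permP ^ x = 1 := by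
    have := congrArg Prod.fst hpow
    simpa using this
  have hL : θ.permL ^ x = 1 := by
    have := congrArg Prod.snd hpow
    simpa using this
  have hA : ∀ q : P, θ.permP q = q → ∀ l : L, Q.inc q l → θ.permL l = l := by
    intro q hq l hl
    refine fix_of_small hx θ.permL hL (fun m => Q.inc q m) (fun m hm => ?_) hl
      (by rw [Q.lines_per_pt]; exact hxt)
    have := (θ.pres q m).mp hm
    rwa [hq] at this
  have hB : ∀ l : L, θ.permL l = l → ∀ q : P, Q.inc q l → θ.permP q = q := by
    intro l hl q hq
    refine fix_of_small hx θ.permP hP (fun r => Q.inc r l) (fun r hr => ?_) hq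
      (by rw [Q.pts_per_line]; exact hxs)
    have := (θ.pres r l).mp hr
    rwa [hl] at this
  have hfixP : ∀ q : P, θ.permP q = q := by
    intro q
    by_cases hqp : q = p
    · rw [hqp, hp]
    by_cases hcol : ∃ l, Q.inc p l ∧ Q.inc q l
    · obtain ⟨l, hpl, hql⟩ := hcol
      exact hB l (hA p hp l hpl) q hql
    · have hne : Nonempty {l // Q.inc q l} :=
        (Nat.card_ne_zero.mp (by rw [Q.lines_per_pt]; omega)).1
      obtain ⟨m, hqm⟩ := hne
      have hpm : ¬ Q.inc p m := fun h => hcol ⟨m, h, hqm⟩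
      obtain ⟨r, ⟨hrm, n, hpn, hrn⟩, -⟩ := Q.gq_axiom p m hpm
      have hrp : θ.permP r = r := hB n (hA p hp n hpn) r hrn
      exact hB m (hA r hrp m hrm) q hqm
  have hfixL : ∀ l : L, θ.permL l = l := by
    intro l
    have hne : Nonempty {q // Q.inc q l} :=
      (Nat.card_ne_zero.mp (by rw [Q.pts_per_line]; omega)).1
    obtain ⟨q, hq⟩ := hne
    exact hA q (hfixP q) l hq
  have : (θ.permP, θ.permL) = 1 := by
    apply Prod.ext <;> simp <;> exact Equiv.ext (by assumption)
  rw [this, orderOf_one] at hord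
  omega
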